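/- The sequences a = (1,2,0,2,4) and b = (2,4,0,1,2) are discrete ambiguity partners, i.e., |𝒜(a)(k,t)| = |𝒜(b)(k,t)| for all k ∈ ℤ and t ∈ ℝ, but b is not a trivial partner of a: there are no c with |c|=1, β ∈ ℝ, k₀ ∈ ℤ, such that b_j = c·e^{iβj}·a_{j-k₀} for all j, nor b_j = c·e^{iβj}·a_{-j-k₀} for all j. -/

import Mathlib

noncomputable def discAmb (a : ℤ → ℂ) (k : ℤ) (t : ℝ) : ℂ :=
  ∑ᶠ j : ℤ, a j * (starRingEnd ℂ) (a (j - k)) * Complex.exp (Complex.I * j * t)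

/-- The sequence `(1,2,0,2,4)`. -/
noncomputable def seqA : ℤ → ℂ := fun j =>
  if j = 0 then 1 else if j = 1 then 2 else if j = 3 then 2 else if j = 4 then 4 else 0

/-- The sequence `(2,4,0,1,2)`. -/
noncomputable def seqB : ℤ → ℂ := fun j =>
  if j = 0 then 2 else if j = 1 then 4 else if j = 3 then 1 else if j = 4 then 2 else 0

lemma seqA_zero (m : ℤ) (h0 : m ≠ 0) (h1 : m ≠ 1) (h3 : m ≠ 3) (h4 : m ≠ 4) : seqA m = 0 := by
  simp [seqA, h0, h1, h3, h4]

lemma seqB_zero (m : ℤ) (h0 : m ≠ 0) (h1 : m ≠ 1) (h3 : m ≠ 3) (h4 : m ≠ 4) : seqB m = 0 := by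
  simp [seqB, h0, h1, h3, h4]

lemma discAmb_expand (a : ℤ → ℂ)
    (ha : ∀ m : ℤ, m ≠ 0 → m ≠ 1 → m ≠ 3 → m ≠ 4 → a m = 0) (k : ℤ) (t : ℝ) :
    discAmb a k t =
      a 0 * (starRingEnd ℂ) (a (0 - k)) +
      a 1 * (starRingEnd ℂ) (a (1 - k)) * Complex.exp (Complex.I * t) +
      a 3 * (starRingEnd ℂ) (a (3 - k)) * Complex.exp (Complex.I * t) ^ 3 +
      a 4 * (starRingEnd ℂ) (a (4 - k)) * Complex.exp (Complex.I * t) ^ 4 := by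
  have hsupp : Function.support
      (fun j : ℤ => a j * (starRingEnd ℂ) (a (j - k)) * Complex.exp (Complex.I * j * t))
      ⊆ (({0,1,3,4} : Finset ℤ) : Set ℤ) := by
    intro j hj
    simp only [Function.mem_support] at hj
    by_contra hjs
    simp only [Finset.coe_insert, Set.mem_insert_iff, Finset.coe_singleton,
      Set.mem_singleton_iff, not_or] at hjs
    obtain ⟨h0, h1, h3, h4⟩ := hjs
    rw [ha j h0 h1 h3 h4] at hj
    simp at hj
  rw [discAmb, finsum_eq_finset_sum_of_support_subset _ hsupp]
  have e : ∀ n : ℕ, Complex.exp (Complex.I * (n : ℤ) * t) = Complex.exp (Complex.I * t) ^ n := by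
    intro n
    rw [← Complex.exp_nat_mul]
    congr 1
    push_cast
    ring
  rw [show (∑ j ∈ ({0,1,3,4} : Finset ℤ),
      a j * (starRingEnd ℂ) (a (j - k)) * Complex.exp (Complex.I * j * t)) =
      a 0 * (starRingEnd ℂ) (a (0 - k)) * Complex.exp (Complex.I * ((0:ℤ):ℂ) * t) +
      a 1 * (starRingEnd ℂ) (a (1 - k)) * Complex.exp (Complex.I * ((1:ℤ):ℂ) * t) +
      a 3 * (starRingEnd ℂ) (a (3 - k)) * Complex.exp (Complex.I * ((3:ℤ):ℂ) * t) +
      a 4 * (starRingEnd ℂ) (a (4 - k)) * Complex.exp (Complex.I * ((4:ℤ):ℂ) * t) from by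
    rw [show ({0,1,3,4} : Finset ℤ) = {0,1,3,4} from rfl]
    rw [Finset.sum_insert (by decide), Finset.sum_insert (by decide),
      Finset.sum_insert (by decide), Finset.sum_singleton]
    ring]
  rw [show ((0:ℤ):ℂ) = ((0:ℕ):ℤ) by norm_num, show ((1:ℤ):ℂ) = ((1:ℕ):ℤ) by norm_num,
    show ((3:ℤ):ℂ) = ((3:ℕ):ℤ) by norm_num, show ((4:ℤ):ℂ) = ((4:ℕ):ℤ) by norm_num,
    e 0, e 1, e 3, e 4]
  ring

lemma key_abs (v : ℂ) (hv : ‖v‖ = 1) :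
    ‖1 + 4 * v‖ = ‖4 + v‖ := by
  have h : 4 + v = v * (starRingEnd ℂ) (1 + 4 * v) := by
    rw [map_add, map_mul, map_one]
    have : v * (starRingEnd ℂ) v = ((Complex.normSq v : ℝ) : ℂ) := Complex.mul_conj v
    have h2 : Complex.normSq v = 1 := by
      rw [← Complex.sq_norm, hv]; norm_num
    rw [h2] at this
    push_cast at this
    rw [show (starRingEnd ℂ) 4 = 4 from map_ofNat _ 4]
    rw [mul_add, mul_comm v (4 * (starRingEnd ℂ) v), mul_assoc, mul_comm ((starRingEnd ℂ) v) v,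
      this]
    ring
  rw [h, norm_mul, hv, Complex.norm_conj, one_mul]

lemma key_abs' (F v : ℂ) (hv : ‖v‖ = 1) :
    ‖F * (1 + 4 * v)‖ = ‖F * (4 + v)‖ := by
  rw [norm_mul, norm_mul, key_abs v hv]

lemma absA_eq_four (m : ℤ) (h : ‖seqA m‖ = 4) : m = 4 := by
  simp only [seqA] at h
  split_ifs at h with h0 h1 h3 h4
  · norm_num at h
  · norm_num [Complex.norm_ofNat] at h
  · norm_num [Complex.norm_ofNat] at h
  · exact h4
  · norm_num at h

lemma abs_exp_unit (β : ℝ) (j : ℤ) : ‖Complex.exp (Complex.I * β * j)‖ = 1 := by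
  rw [Complex.norm_exp]
  simp

theorem stmt16 :
    (∀ (k : ℤ) (t : ℝ), ‖discAmb seqA k t‖ = ‖discAmb seqB k t‖) ∧
    ¬ (∃ (c : ℂ) (β : ℝ) (k₀ : ℤ), ‖c‖ = 1 ∧
        ((∀ j : ℤ, seqB j = c * Complex.exp (Complex.I * β * j) * seqA (j - k₀)) ∨
         (∀ j : ℤ, seqB j = c * Complex.exp (Complex.I * β * j) * seqA (-j - k₀)))) := by
  constructor
  · intro k t
    set u : ℂ := Complex.exp (Complex.I * t) with hu
    have hu1 : ‖u‖ = 1 := by rw [hu, Complex.norm_exp]; simp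
    rw [discAmb_expand seqA seqA_zero, discAmb_expand seqB seqB_zero]
    by_cases hk : -4 ≤ k ∧ k ≤ 4
    · obtain ⟨hk1, hk2⟩ := hk
      have hu3 : ‖Complex.exp (Complex.I * t) ^ 3‖ = 1 := by
        rw [norm_pow, hu1]; norm_num
      interval_cases k
      · simp only [seqA, seqB]; norm_num [map_ofNat]
      · simp only [seqA, seqB]; norm_num [map_ofNat]
      · simp only [seqA, seqB]; norm_num [map_ofNat]
      · -- k = -1
        simp only [seqA, seqB]; norm_num [map_ofNat]
        convert key_abs' 2 (Complex.exp (Complex.I * t) ^ 3) hu3 using 2 <;> ring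
      · -- k = 0
        simp only [seqA, seqB]; norm_num [map_ofNat]
        convert key_abs' (1 + 4 * Complex.exp (Complex.I * t))
          (Complex.exp (Complex.I * t) ^ 3) hu3 using 2 <;> ring
      · -- k = 1
        simp only [seqA, seqB]; norm_num [map_ofNat]
        convert key_abs' (2 * Complex.exp (Complex.I * t))
          (Complex.exp (Complex.I * t) ^ 3) hu3 using 2 <;> ring
      · simp only [seqA, seqB]; norm_num [map_ofNat]
      · simp only [seqA, seqB]; norm_num [map_ofNat]
      · simp only [seqA, seqB]; norm_num [map_ofNat]
    · push_neg at hk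
      rcases lt_or_ge k (-4) with h | h
      · rw [seqA_zero (0-k) (by omega) (by omega) (by omega) (by omega),
          seqA_zero (1-k) (by omega) (by omega) (by omega) (by omega),
          seqA_zero (3-k) (by omega) (by omega) (by omega) (by omega),
          seqA_zero (4-k) (by omega) (by omega) (by omega) (by omega),
          seqB_zero (0-k) (by omega) (by omega) (by omega) (by omega),
          seqB_zero (1-k) (by omega) (by omega) (by omega) (by omega),
          seqB_zero (3-k) (by omega) (by omega) (by omega) (by omega),
          seqB_zero (4-k) (by omega) (by omega) (by omega) (by omega)]
        simp
      · have h5 : 4 < k := hk h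
        rw [seqA_zero (0-k) (by omega) (by omega) (by omega) (by omega),
          seqA_zero (1-k) (by omega) (by omega) (by omega) (by omega),
          seqA_zero (3-k) (by omega) (by omega) (by omega) (by omega),
          seqA_zero (4-k) (by omega) (by omega) (by omega) (by omega),
          seqB_zero (0-k) (by omega) (by omega) (by omega) (by omega),
          seqB_zero (1-k) (by omega) (by omega) (by omega) (by omega),
          seqB_zero (3-k) (by omega) (by omega) (by omega) (by omega),
          seqB_zero (4-k) (by omega) (by omega) (by omega) (by omega)]
        simp
  · rintro ⟨c, β, k₀, hc, h | h⟩
    · have h1 := congrArg (fun x : ℂ => ‖x‖) (h 1)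
      rw [show seqB 1 = 4 by norm_num [seqB], norm_mul, norm_mul, hc, abs_exp_unit,
        one_mul, one_mul] at h1
      have hk : (1 : ℤ) - k₀ = 4 := absA_eq_four _ (by rw [← h1]; norm_num [Complex.norm_ofNat])
      have hk0 : k₀ = -3 := by omega
      have h3 := h 3
      rw [hk0, show (3 : ℤ) - (-3) = 6 by norm_num, show seqA 6 = 0 by norm_num [seqA],
        show seqB 3 = 1 by norm_num [seqB], mul_zero] at h3
      exact one_ne_zero h3
    · have h1 := congrArg (fun x : ℂ => ‖x‖) (h 1)
      rw [show seqB 1 = 4 by norm_num [seqB], norm_mul, norm_mul, hc, abs_exp_unit,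
        one_mul, one_mul] at h1
      have hk : (-1 : ℤ) - k₀ = 4 := absA_eq_four _ (by rw [← h1]; norm_num [Complex.norm_ofNat])
      have hk0 : k₀ = -5 := by omega
      have h0 := h 0
      rw [hk0, show (-(0:ℤ)) - (-5) = 5 by norm_num, show seqA 5 = 0 by norm_num [seqA],
        show seqB 0 = 2 by norm_num [seqB], mul_zero] at h0
      exact two_ne_zero h0
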